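/- Let A = (a_{ij}) be the 2N×2N matrix h_l^{cl} with s = sech(u) as above, and define h(x) = adj(x·I − A). Then for 1 ≤ k ≤ N, the entries of the first column of the adjugate are given explicitly by (h(x))_{2k−1,1} = (x−1)^{N−k+1} x^{N−k} (s²+x−1)^{k−1} and (h(x))_{2k,1} = −s (x−1)^{N−k} x^{N−k} (s²+x−1)^{k−1}. -/
import Mathlib


/-- The lower-triangular matrix `h_l^{cl}` on `2N` sites (0-based indexing of
the 1-based description): diagonal entries `1` at 1-based even positions,
subdiagonal entries `-s`, second subdiagonal entries `1` starting from
1-based odd columns. -/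
def hlcl (N : ℕ) (s : ℝ) : Matrix (Fin (2 * N)) (Fin (2 * N)) ℝ :=
  Matrix.of fun i j =>
    if i = j then (if (i : ℕ) % 2 = 1 then 1 else 0)
    else if (i : ℕ) = (j : ℕ) + 1 then -s
    else if (i : ℕ) = (j : ℕ) + 2 ∧ (j : ℕ) % 2 = 0 then 1
    else 0

open Matrix Finset

noncomputable def advec (N : ℕ) (s x : ℝ) (i : Fin (2 * N)) : ℝ :=
  if (i : ℕ) % 2 = 0 then
    (x - 1) ^ (N - (i : ℕ) / 2) * x ^ (N - (i : ℕ) / 2 - 1) * (s ^ 2 + x - 1) ^ ((i : ℕ) / 2)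
  else
    -s * ((x - 1) * x) ^ (N - (i : ℕ) / 2 - 1) * (s ^ 2 + x - 1) ^ ((i : ℕ) / 2)

lemma Mapp (N : ℕ) (s x : ℝ) (i j : Fin (2 * N)) :
    (x • (1 : Matrix (Fin (2 * N)) (Fin (2 * N)) ℝ) - hlcl N s) i j =
      (if i = j then x - (if (i : ℕ) % 2 = 1 then 1 else 0) else 0)
      + (if (i : ℕ) = (j : ℕ) + 1 then s else 0)
      + (if (i : ℕ) = (j : ℕ) + 2 ∧ (j : ℕ) % 2 = 0 then -1 else 0) := by
  have hij : (i = j) ↔ ((i : ℕ) = (j : ℕ)) := Fin.ext_iff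
  simp only [Matrix.sub_apply, Matrix.smul_apply, Matrix.one_apply, hlcl, Matrix.of_apply,
    smul_eq_mul]
  split_ifs <;> simp_all <;> omega

lemma prod_aux (x : ℝ) : ∀ N : ℕ,
    (∏ t ∈ Finset.range (2 * N), (if t % 2 = 1 then x - 1 else x)) = x ^ N * (x - 1) ^ N := by
  intro N
  induction N with
  | zero => simp
  | succ n ih =>
    rw [show 2 * (n + 1) = (2 * n + 1) + 1 by ring, Finset.prod_range_succ,
      Finset.prod_range_succ, ih]
    have h1 : (2 * n) % 2 = 0 := by omega
    have h2 : (2 * n + 1) % 2 = 1 := by omega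
    rw [if_neg (by omega), if_pos h2]
    ring

lemma detM (N : ℕ) (s x : ℝ) :
    (x • (1 : Matrix (Fin (2 * N)) (Fin (2 * N)) ℝ) - hlcl N s).det
      = x ^ N * (x - 1) ^ N := by
  have ht : (x • (1 : Matrix (Fin (2 * N)) (Fin (2 * N)) ℝ) - hlcl N s).BlockTriangular
      OrderDual.toDual := by
    intro i j hij
    have hlt : (i : ℕ) < (j : ℕ) := hij
    rw [Mapp, if_neg (show ¬(i = j) by rw [Fin.ext_iff]; omega),
      if_neg (show ¬((i : ℕ) = (j : ℕ) + 1) by omega),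
      if_neg (show ¬((i : ℕ) = (j : ℕ) + 2 ∧ (j : ℕ) % 2 = 0) by omega)]
    ring
  rw [Matrix.det_of_lowerTriangular _ ht]
  have he : ∀ i : Fin (2 * N),
      (x • (1 : Matrix (Fin (2 * N)) (Fin (2 * N)) ℝ) - hlcl N s) i i
        = (fun t : ℕ => if t % 2 = 1 then x - 1 else x) (i : ℕ) := by
    intro i
    rw [Mapp, if_neg (show ¬((i : ℕ) = (i : ℕ) + 1) by omega),
      if_neg (show ¬((i : ℕ) = (i : ℕ) + 2 ∧ (i : ℕ) % 2 = 0) by omega),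
      if_pos rfl]
    simp only [sub_eq_add_neg]
    split_ifs <;> simp_all <;> ring
  rw [Finset.prod_congr rfl (fun i _ => he i)]
  rw [Fin.prod_univ_eq_prod_range (fun t : ℕ => if t % 2 = 1 then x - 1 else x) (2 * N)]
  exact prod_aux x N

lemma key (N : ℕ) (s x : ℝ) :
    (x • (1 : Matrix (Fin (2 * N)) (Fin (2 * N)) ℝ) - hlcl N s) *ᵥ advec N s x
      = fun i : Fin (2 * N) => if (i : ℕ) = 0 then x ^ N * (x - 1) ^ N else 0 := by
  funext i
  show (∑ j, (x • (1 : Matrix (Fin (2 * N)) (Fin (2 * N)) ℝ) - hlcl N s) i j * advec N s x j)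
      = _
  simp only [Mapp, add_mul, Finset.sum_add_distrib, ite_mul, zero_mul]
  have hiN : (i : ℕ) < 2 * N := i.isLt
  rcases Nat.even_or_odd (i : ℕ) with ⟨m, hm⟩ | ⟨m, hm⟩
  · -- i even, (i:ℕ) = m + m
    have hmN : m < N := by omega
    have hpar : ¬((i : ℕ) % 2 = 1) := by omega
    by_cases hm0 : m = 0
    · -- first row
      rw [Finset.sum_eq_zero (fun (j : Fin (2 * N)) _ => if_neg (show ¬((i : ℕ) = (j : ℕ) + 1) by omega)),
        Finset.sum_eq_zero
          (fun (j : Fin (2 * N)) _ => if_neg (show ¬((i : ℕ) = (j : ℕ) + 2 ∧ (j : ℕ) % 2 = 0) by omega)),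
        Finset.sum_ite_eq, if_pos (Finset.mem_univ i), if_neg hpar,
        if_pos (show (i : ℕ) = 0 by omega)]
      have hv : advec N s x i = (x - 1) ^ N * x ^ (N - 1) * 1 := by
        rw [advec, if_pos (by omega : (i : ℕ) % 2 = 0),
          (by omega : (i : ℕ) / 2 = 0)]
        norm_num
      rw [hv]
      obtain ⟨a, ha⟩ : ∃ a, N = a + 1 := ⟨N - 1, by omega⟩
      rw [ha]
      simp only [Nat.add_sub_cancel]
      ring
    · -- even row, m ≥ 1
      have hb1 : m + m - 1 < 2 * N := by omega
      have hb2 : m + m - 2 < 2 * N := by omega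
      set j1 : Fin (2 * N) := ⟨m + m - 1, hb1⟩ with hj1
      set j2 : Fin (2 * N) := ⟨m + m - 2, hb2⟩ with hj2
      have hv1 : (j1 : ℕ) = m + m - 1 := rfl
      have hv2 : (j2 : ℕ) = m + m - 2 := rfl
      have e2 : ∀ j : Fin (2 * N), ((i : ℕ) = (j : ℕ) + 1) = (j1 = j) := by
        intro j
        simp only [Fin.ext_iff, hv1]
        apply propext
        constructor <;> (intro h; omega)
      have e3 : ∀ j : Fin (2 * N),
          ((i : ℕ) = (j : ℕ) + 2 ∧ (j : ℕ) % 2 = 0) = (j2 = j) := by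
        intro j
        simp only [Fin.ext_iff, hv2]
        apply propext
        constructor <;> (intro h; omega)
      simp only [e2, e3]
      rw [Finset.sum_ite_eq, if_pos (Finset.mem_univ i),
        Finset.sum_ite_eq, if_pos (Finset.mem_univ j1),
        Finset.sum_ite_eq, if_pos (Finset.mem_univ j2),
        if_neg hpar, if_neg (show ¬((i : ℕ) = 0) by omega)]
      have hvi : advec N s x i
          = (x - 1) ^ (N - m) * x ^ (N - m - 1) * (s ^ 2 + x - 1) ^ m := by
        rw [advec, if_pos (by omega : (i : ℕ) % 2 = 0), (by omega : (i : ℕ) / 2 = m)]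
      have hvj1 : advec N s x j1
          = -s * ((x - 1) * x) ^ (N - m) * (s ^ 2 + x - 1) ^ (m - 1) := by
        rw [advec, hv1, if_neg (by omega : ¬((m + m - 1) % 2 = 0)),
          (by omega : (m + m - 1) / 2 = m - 1), (by omega : N - (m - 1) - 1 = N - m)]
      have hvj2 : advec N s x j2
          = (x - 1) ^ (N - m + 1) * x ^ (N - m) * (s ^ 2 + x - 1) ^ (m - 1) := by
        rw [advec, hv2, if_pos (by omega : (m + m - 2) % 2 = 0),
          (by omega : (m + m - 2) / 2 = m - 1), (by omega : N - (m - 1) - 1 = N - m),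
          (by omega : N - (m - 1) = N - m + 1)]
      rw [hvi, hvj1, hvj2]
      obtain ⟨a, ha1, ha2⟩ : ∃ a, N - m = a + 1 ∧ N - m - 1 = a := ⟨N - m - 1, by omega⟩
      obtain ⟨b, hb⟩ : ∃ b, m = b + 1 := ⟨m - 1, by omega⟩
      rw [(by omega : N - m - 1 = a), (by omega : N - m + 1 = a + 2), ha1,
        (by omega : m - 1 = b), hb]
      simp only [mul_pow]
      ring
  · -- i odd, (i:ℕ) = 2 * m + 1
    have hmN : m < N := by omega
    have hpar : (i : ℕ) % 2 = 1 := by omega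
    have hb1 : 2 * m < 2 * N := by omega
    set j1 : Fin (2 * N) := ⟨2 * m, hb1⟩ with hj1
    have hv1 : (j1 : ℕ) = 2 * m := rfl
    have e2 : ∀ j : Fin (2 * N), ((i : ℕ) = (j : ℕ) + 1) = (j1 = j) := by
      intro j
      simp only [Fin.ext_iff, hv1]
      apply propext
      constructor <;> (intro h; omega)
    simp only [e2]
    rw [Finset.sum_eq_zero
        (fun (j : Fin (2 * N)) _ => if_neg (show ¬((i : ℕ) = (j : ℕ) + 2 ∧ (j : ℕ) % 2 = 0) by omega)),
      Finset.sum_ite_eq, if_pos (Finset.mem_univ i),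
      Finset.sum_ite_eq, if_pos (Finset.mem_univ j1),
      if_pos hpar, if_neg (show ¬((i : ℕ) = 0) by omega)]
    have hvi : advec N s x i
        = -s * ((x - 1) * x) ^ (N - m - 1) * (s ^ 2 + x - 1) ^ m := by
      rw [advec, if_neg (by omega : ¬((i : ℕ) % 2 = 0)), (by omega : (i : ℕ) / 2 = m)]
    have hvj1 : advec N s x j1
        = (x - 1) ^ (N - m) * x ^ (N - m - 1) * (s ^ 2 + x - 1) ^ m := by
      rw [advec, hv1, if_pos (by omega : (2 * m) % 2 = 0), (by omega : (2 * m) / 2 = m)]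
    rw [hvi, hvj1]
    obtain ⟨a, ha1, ha2⟩ : ∃ a, N - m = a + 1 ∧ N - m - 1 = a := ⟨N - m - 1, by omega⟩
    rw [ha2, ha1]
    simp only [mul_pow]
    ring

lemma adj_col_generic (N : ℕ) (hN : 0 < N) (s y : ℝ) (hy0 : y ≠ 0) (hy1 : y ≠ 1)
    (i : Fin (2 * N)) :
    (y • (1 : Matrix (Fin (2 * N)) (Fin (2 * N)) ℝ) - hlcl N s).adjugate i ⟨0, by omega⟩
      = advec N s y i := by
  set M := y • (1 : Matrix (Fin (2 * N)) (Fin (2 * N)) ℝ) - hlcl N s with hM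
  have hdet : M.det = y ^ N * (y - 1) ^ N := detM N s y
  have hu : IsUnit M.det := by
    rw [hdet]
    exact (mul_ne_zero (pow_ne_zero _ hy0) (pow_ne_zero _ (sub_ne_zero.mpr hy1))).isUnit
  have h1 : M *ᵥ (fun j => M.adjugate j ⟨0, by omega⟩) = M *ᵥ advec N s y := by
    rw [key N s y]
    funext r
    show ∑ j, M r j * M.adjugate j ⟨0, by omega⟩ = _
    rw [← Matrix.mul_apply, Matrix.mul_adjugate, Matrix.smul_apply, Matrix.one_apply, hdet]
    have : (r = (⟨0, by omega⟩ : Fin (2 * N))) ↔ ((r : ℕ) = 0) := by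
      rw [Fin.ext_iff]
    split_ifs with h h' h' <;> simp_all
  have h2 := congrArg (fun w => M⁻¹ *ᵥ w) h1
  simp only [Matrix.mulVec_mulVec, Matrix.nonsing_inv_mul M hu, Matrix.one_mulVec] at h2
  exact congrFun h2 i

lemma adj_col (N : ℕ) (hN : 0 < N) (s x : ℝ) (i : Fin (2 * N)) :
    (x • (1 : Matrix (Fin (2 * N)) (Fin (2 * N)) ℝ) - hlcl N s).adjugate i ⟨0, by omega⟩
      = advec N s x i := by
  have hc1 : Continuous fun y : ℝ =>
      (y • (1 : Matrix (Fin (2 * N)) (Fin (2 * N)) ℝ) - hlcl N s).adjugate i ⟨0, by omega⟩ := by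
    have : Continuous fun y : ℝ =>
        (y • (1 : Matrix (Fin (2 * N)) (Fin (2 * N)) ℝ) - hlcl N s) := by
      apply continuous_matrix
      intro a b
      fun_prop
    exact ((this.matrix_adjugate).matrix_elem i ⟨0, by omega⟩)
  have hc2 : Continuous fun y : ℝ => advec N s y i := by
    unfold advec
    by_cases h : (i : ℕ) % 2 = 0
    · simp only [if_pos h]; fun_prop
    · simp only [if_neg h]; fun_prop
  have hd : Dense ({0, 1}ᶜ : Set ℝ) :=
    Set.Countable.dense_compl ℝ (((Set.finite_singleton (1:ℝ)).insert 0).countable)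
  have heq : Set.EqOn (fun y : ℝ =>
      (y • (1 : Matrix (Fin (2 * N)) (Fin (2 * N)) ℝ) - hlcl N s).adjugate i ⟨0, by omega⟩)
      (fun y : ℝ => advec N s y i) ({0, 1}ᶜ : Set ℝ) := by
    intro y hy
    simp only [Set.mem_compl_iff, Set.mem_insert_iff, Set.mem_singleton_iff, not_or] at hy
    exact adj_col_generic N hN s y hy.1 hy.2 i
  exact congrFun (Continuous.ext_on hd hc1 hc2 heq) x


/-- Explicit first-column entries of the adjugate `h(x) = adj(x·I − h_l^{cl})`:
in 1-based indexing, `(h(x))_{2k-1,1} = (x-1)^{N-k+1} x^{N-k} (s²+x-1)^{k-1}`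
and `(h(x))_{2k,1} = -s (x-1)^{N-k} x^{N-k} (s²+x-1)^{k-1}`, with `s = sech u`. -/
theorem adjugate_first_column (N : ℕ) (hN : 0 < N) (u : ℝ) (x : ℝ)
    (k : ℕ) (hk1 : 1 ≤ k) (hkN : k ≤ N) :
    ((x • (1 : Matrix (Fin (2 * N)) (Fin (2 * N)) ℝ) -
          hlcl N (Real.cosh u)⁻¹).adjugate
        ⟨2 * k - 2, by omega⟩ ⟨0, by omega⟩ =
      (x - 1) ^ (N - k + 1) * x ^ (N - k) * ((Real.cosh u)⁻¹ ^ 2 + x - 1) ^ (k - 1)) ∧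
    ((x • (1 : Matrix (Fin (2 * N)) (Fin (2 * N)) ℝ) -
          hlcl N (Real.cosh u)⁻¹).adjugate
        ⟨2 * k - 1, by omega⟩ ⟨0, by omega⟩ =
      -(Real.cosh u)⁻¹ * (x - 1) ^ (N - k) * x ^ (N - k) *
        ((Real.cosh u)⁻¹ ^ 2 + x - 1) ^ (k - 1)) := by
  constructor
  · rw [adj_col N hN (Real.cosh u)⁻¹ x ⟨2 * k - 2, by omega⟩]
    rw [advec]
    have h1 : ((⟨2 * k - 2, by omega⟩ : Fin (2 * N)) : ℕ) = 2 * k - 2 := rfl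
    rw [h1, if_pos (by omega : (2 * k - 2) % 2 = 0), (by omega : (2 * k - 2) / 2 = k - 1),
      (by omega : N - (k - 1) - 1 = N - k), (by omega : N - (k - 1) = N - k + 1)]
  · rw [adj_col N hN (Real.cosh u)⁻¹ x ⟨2 * k - 1, by omega⟩]
    rw [advec]
    have h1 : ((⟨2 * k - 1, by omega⟩ : Fin (2 * N)) : ℕ) = 2 * k - 1 := rfl
    rw [h1, if_neg (by omega : ¬((2 * k - 1) % 2 = 0)), (by omega : (2 * k - 1) / 2 = k - 1),
      (by omega : N - (k - 1) - 1 = N - k), mul_pow]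
    ring
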